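/- Let ρ > 0, M > 0 and t ∈ (0,1], and let W : ℝ^n → ℝ^n be a Hölder continuous vector field of exponent t, supported in the ball B_ρ of radius ρ about the origin, with sup norm plus Hölder-t seminorm at most M. Then there is a constant C > 0, depending only on n, ρ, t and M, such that for all μ₁, μ₂ ∈ ℂ^n, each of whose real and imaginary parts are orthogonal unit vectors in ℝ^n, one has sup_{x ∈ B_ρ} |exp(i N_{μ₁}^{-1}(−μ₁·W)(x)) − exp(i N_{μ₂}^{-1}(−μ₂·W)(x))| ≤ C |μ₁ − μ₂|^t. -/

import Mathlib

open MeasureTheory Complex Real Set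
open scoped BigOperators

noncomputable section

/-- `ℝ^n` with the Euclidean norm. -/
abbrev Euc (n : ℕ) : Type := EuclideanSpace ℝ (Fin n)

/-- The vector of real parts of `μ ∈ ℂⁿ`. -/
noncomputable def reV {n : ℕ} (μ : EuclideanSpace ℂ (Fin n)) : Euc n := WithLp.toLp 2 (fun j => (μ j).re)

/-- The vector of imaginary parts of `μ ∈ ℂⁿ`. -/
noncomputable def imV {n : ℕ} (μ : EuclideanSpace ℂ (Fin n)) : Euc n := WithLp.toLp 2 (fun j => (μ j).im)

/-- The Cauchy-transform inverse `N_μ⁻¹` of the transport operator `μ·∇`. -/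
noncomputable def Nmuinv {n : ℕ} (μ : EuclideanSpace ℂ (Fin n)) (f : Euc n → ℂ) : Euc n → ℂ :=
  fun x => (1 / (2 * (π : ℂ))) *
    ∫ y : ℝ × ℝ, f (x - y.1 • reV μ - y.2 • imV μ) / ((y.1 : ℂ) + (y.2 : ℂ) * Complex.I)

/-- `μ` has orthonormal real and imaginary parts. -/
def GoodMu {n : ℕ} (μ : EuclideanSpace ℂ (Fin n)) : Prop :=
  ‖reV μ‖ = 1 ∧ ‖imV μ‖ = 1 ∧ (inner ℝ (reV μ) (imV μ) : ℝ) = 0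

/-- The function `x ↦ μ · W(x) = Σ_j μ_j W_j(x)`. -/
noncomputable def muDotW {n : ℕ} (μ : EuclideanSpace ℂ (Fin n)) (W : Euc n → Euc n) :
    Euc n → ℂ :=
  fun x => ∑ j, μ j * ((W x j : ℝ) : ℂ)

/-- `W` is Hölder continuous of exponent `t`, with sup norm plus Hölder seminorm at most `M`. -/
def HolderBdd {n : ℕ} (t M : ℝ) (W : Euc n → Euc n) : Prop :=
  ∃ a b : ℝ, 0 ≤ a ∧ 0 ≤ b ∧ a + b ≤ M ∧ (∀ x, ‖W x‖ ≤ a) ∧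
    ∀ x y, ‖W x - W y‖ ≤ b * ‖x - y‖ ^ t


noncomputable def rad (y : ℝ × ℝ) : ℝ := Real.sqrt (y.1^2 + y.2^2)

noncomputable def bigG (R : ℝ) : ℝ × ℝ → ℝ :=
  Set.indicator {y : ℝ × ℝ | rad y ≤ R} (fun y => (rad y)⁻¹)

lemma continuous_rad : Continuous rad := by
  unfold rad; fun_prop

lemma measurableSet_radle (R : ℝ) : MeasurableSet {y : ℝ × ℝ | rad y ≤ R} :=
  measurableSet_le continuous_rad.measurable measurable_const

lemma integrable_bigG {R : ℝ} (hR : 0 < R) : Integrable (bigG R) := by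
  have hinj : Set.InjOn (⇑polarCoord.symm) polarCoord.target :=
    polarCoord.symm.injOn
  have hiff := integrableOn_image_iff_integrableOn_abs_det_fderiv_smul (volume : Measure (ℝ × ℝ))
    polarCoord.open_target.measurableSet
    (fun p _ => (hasFDerivAt_polarCoord_symm p).hasFDerivWithinAt)
    hinj (bigG R)
  rw [polarCoord.symm_image_target_eq_source] at hiff
  have htgt : IntegrableOn
      (fun p => |(LinearMap.toContinuousLinearMap
      ((Matrix.toLin (Module.Basis.finTwoProd ℝ) (Module.Basis.finTwoProd ℝ))
        !![Real.cos p.2, -p.1 * Real.sin p.2; Real.sin p.2, p.1 * Real.cos p.2])).det| •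
        bigG R (polarCoord.symm p)) polarCoord.target := by
    have hdet : ∀ p : ℝ × ℝ, (LinearMap.toContinuousLinearMap
      ((Matrix.toLin (Module.Basis.finTwoProd ℝ) (Module.Basis.finTwoProd ℝ))
        !![Real.cos p.2, -p.1 * Real.sin p.2; Real.sin p.2, p.1 * Real.cos p.2])).det = p.1 := by
      intro p
      conv_rhs => rw [← one_mul p.1, ← Real.cos_sq_add_sin_sq p.2]
      simp only [neg_mul, LinearMap.det_toContinuousLinearMap, LinearMap.det_toLin,
        Matrix.det_fin_two_of, sub_neg_eq_add]
      ring
    have heq : Set.EqOn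
        (fun p => |(LinearMap.toContinuousLinearMap
      ((Matrix.toLin (Module.Basis.finTwoProd ℝ) (Module.Basis.finTwoProd ℝ))
        !![Real.cos p.2, -p.1 * Real.sin p.2; Real.sin p.2, p.1 * Real.cos p.2])).det| •
        bigG R (polarCoord.symm p))
        (Set.indicator ((Set.Ioc (0:ℝ) R) ×ˢ (Set.Ioo (-π) π)) (fun _ => (1:ℝ)))
        polarCoord.target := by
      intro p hp
      rw [polarCoord_target] at hp
      obtain ⟨hp1, hp2⟩ := hp
      simp only [Set.mem_Ioi] at hp1
      simp only [Prod.forall, polarCoord_symm_apply]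
      have hradp : rad (p.1 * Real.cos p.2, p.1 * Real.sin p.2) = p.1 := by
        unfold rad
        simp only
        rw [show (p.1 * Real.cos p.2)^2 + (p.1 * Real.sin p.2)^2 = p.1^2 * ((Real.cos p.2)^2 + (Real.sin p.2)^2) by ring,
          Real.cos_sq_add_sin_sq, mul_one, Real.sqrt_sq hp1.le]
      simp only [hdet p, abs_of_pos hp1, smul_eq_mul]
      unfold bigG
      by_cases hle : p.1 ≤ R
      · rw [Set.indicator_of_mem (by simpa [hradp] using hle),
          Set.indicator_of_mem (by exact ⟨⟨hp1, hle⟩, hp2⟩)]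
        rw [hradp]
        field_simp
      · rw [Set.indicator_of_notMem (by simpa [hradp] using hle),
          Set.indicator_of_notMem (by simp [Set.mem_prod, hle])]
        simp
    rw [integrableOn_congr_fun heq polarCoord.open_target.measurableSet]
    rw [← integrable_indicator_iff]
    · rw [Set.indicator_indicator]
      apply (integrable_indicator_iff ?_).2
      · apply integrableOn_const
        refine LT.lt.ne ?_
        rw [Measure.volume_eq_prod]
        calc (volume.prod volume) (polarCoord.target ∩ Ioc (0:ℝ) R ×ˢ Ioo (-π) π)
            ≤ (volume.prod volume) (Ioc (0:ℝ) R ×ˢ Ioo (-π) π) := by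
              apply measure_mono; exact Set.inter_subset_right
          _ < ⊤ := by
              rw [Measure.prod_prod, Real.volume_Ioc, Real.volume_Ioo]
              exact ENNReal.mul_lt_top ENNReal.ofReal_lt_top ENNReal.ofReal_lt_top
        exact enorm_ne_top
      · exact polarCoord.open_target.measurableSet.inter
          (measurableSet_Ioc.prod measurableSet_Ioo)
    · exact polarCoord.open_target.measurableSet
  have hsrc : IntegrableOn (bigG R) polarCoord.source := hiff.2 htgt
  rw [← integrableOn_univ, IntegrableOn,
    ← Measure.restrict_congr_set polarCoord_source_ae_eq_univ]
  exact hsrc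

-- norm squared decomposition
lemma normC_sq {n : ℕ} (μ : EuclideanSpace ℂ (Fin n)) :
    ‖μ‖ ^ 2 = ‖reV μ‖ ^ 2 + ‖imV μ‖ ^ 2 := by
  rw [EuclideanSpace.norm_eq, EuclideanSpace.norm_eq, EuclideanSpace.norm_eq,
    Real.sq_sqrt (by positivity), Real.sq_sqrt (by positivity), Real.sq_sqrt (by positivity),
    ← Finset.sum_add_distrib]
  refine Finset.sum_congr rfl fun j _ => ?_
  simp [reV, imV, Real.norm_eq_abs, sq_abs, Complex.sq_norm, Complex.normSq_apply]
  ring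

lemma norm_goodmu {n : ℕ} {μ : EuclideanSpace ℂ (Fin n)} (h : GoodMu μ) :
    ‖μ‖ = Real.sqrt 2 := by
  have h2 : ‖μ‖ ^ 2 = 2 := by rw [normC_sq, h.1, h.2.1]; norm_num
  rw [← Real.sqrt_sq (norm_nonneg μ), h2]

lemma norm_reV_le {n : ℕ} (μ : EuclideanSpace ℂ (Fin n)) : ‖reV μ‖ ≤ ‖μ‖ := by
  have := normC_sq μ
  nlinarith [norm_nonneg μ, norm_nonneg (reV μ), norm_nonneg (imV μ), sq_nonneg ‖imV μ‖]

lemma norm_imV_le {n : ℕ} (μ : EuclideanSpace ℂ (Fin n)) : ‖imV μ‖ ≤ ‖μ‖ := by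
  have := normC_sq μ
  nlinarith [norm_nonneg μ, norm_nonneg (reV μ), norm_nonneg (imV μ), sq_nonneg ‖reV μ‖]

lemma reV_sub {n : ℕ} (μ₁ μ₂ : EuclideanSpace ℂ (Fin n)) :
    reV (μ₁ - μ₂) = reV μ₁ - reV μ₂ := by
  ext j; simp [reV, Complex.sub_re]

lemma imV_sub {n : ℕ} (μ₁ μ₂ : EuclideanSpace ℂ (Fin n)) :
    imV (μ₁ - μ₂) = imV μ₁ - imV μ₂ := by
  ext j; simp [imV, Complex.sub_im]

-- Cauchy-Schwarz style bound
lemma muDot_norm_le {n : ℕ} (μ : EuclideanSpace ℂ (Fin n)) (v : Euc n) :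
    ‖∑ j, μ j * ((v j : ℝ) : ℂ)‖ ≤ ‖μ‖ * ‖v‖ := by
  set u : EuclideanSpace ℂ (Fin n) := WithLp.toLp 2 (fun j => (starRingEnd ℂ) (μ j)) with hu
  set w : EuclideanSpace ℂ (Fin n) := WithLp.toLp 2 (fun j => ((v j : ℝ) : ℂ)) with hw
  have h1 : (inner ℂ u w : ℂ) = ∑ j, μ j * ((v j : ℝ) : ℂ) := by
    rw [PiLp.inner_apply]
    refine Finset.sum_congr rfl fun j _ => ?_
    simp [hu, hw, mul_comm]
  have h2 : ‖u‖ = ‖μ‖ := by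
    rw [EuclideanSpace.norm_eq, EuclideanSpace.norm_eq]
    congr 1
    exact Finset.sum_congr rfl fun j _ => by simp [hu]
  have h3 : ‖w‖ = ‖v‖ := by
    rw [EuclideanSpace.norm_eq, EuclideanSpace.norm_eq]
    congr 1
    exact Finset.sum_congr rfl fun j _ => by simp [hw]
  calc ‖∑ j, μ j * ((v j : ℝ) : ℂ)‖ = ‖(inner ℂ u w : ℂ)‖ := by rw [h1]
    _ ≤ ‖u‖ * ‖w‖ := norm_inner_le_norm u w
    _ = ‖μ‖ * ‖v‖ := by rw [h2, h3]

lemma muDot_norm_le₂ {n : ℕ} (μ : EuclideanSpace ℂ (Fin n)) (v w : Euc n) :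
    ‖∑ j, μ j * (((v j : ℝ) : ℂ) - ((w j : ℝ) : ℂ))‖ ≤ ‖μ‖ * ‖v - w‖ := by
  have h : ∀ j, ((v j : ℝ) : ℂ) - ((w j : ℝ) : ℂ) = (((v - w) j : ℝ) : ℂ) := by
    intro j
    have : (v - w) j = v j - w j := rfl
    rw [this]; push_cast; ring
  calc ‖∑ j, μ j * (((v j : ℝ) : ℂ) - ((w j : ℝ) : ℂ))‖
      = ‖∑ j, μ j * (((v - w) j : ℝ) : ℂ)‖ := by
        congr 1; exact Finset.sum_congr rfl fun j _ => by rw [h j]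
    _ ≤ ‖μ‖ * ‖v - w‖ := muDot_norm_le μ (v - w)

-- orthonormal combination
lemma norm_comb {n : ℕ} {μ : EuclideanSpace ℂ (Fin n)} (h : GoodMu μ) (a b : ℝ) :
    ‖a • reV μ + b • imV μ‖ = Real.sqrt (a ^ 2 + b ^ 2) := by
  have hsq : ‖a • reV μ + b • imV μ‖ ^ 2 = a ^ 2 + b ^ 2 := by
    rw [norm_add_sq_real, norm_smul, norm_smul, real_inner_smul_left, real_inner_smul_right,
      h.2.2, h.1, h.2.1]
    simp [mul_pow, sq_abs]
  rw [← Real.sqrt_sq (norm_nonneg _), hsq]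

-- continuity from Hölder
lemma cont_of_holder {n : ℕ} {W : Euc n → Euc n} {b t : ℝ} (ht : 0 < t)
    (h : ∀ x y, ‖W x - W y‖ ≤ b * ‖x - y‖ ^ t) : Continuous W := by
  rw [continuous_iff_continuousAt]
  intro x
  have h0 : Filter.Tendsto (fun z => W z - W x) (nhds x) (nhds 0) := by
    apply squeeze_zero_norm (fun z => h z x)
    have h1 : Filter.Tendsto (fun z : Euc n => ‖z - x‖) (nhds x) (nhds 0) := by
      have := ((continuous_id.sub (continuous_const (y := x))).norm).tendsto x
      simpa using this
    have h2 := ((Real.continuousAt_rpow_const 0 t (Or.inr ht.le)).tendsto).comp h1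
    have h3 := h2.const_mul b
    simpa [Real.zero_rpow ht.ne'] using h3
  have h4 := h0.add (tendsto_const_nhds (x := W x))
  unfold ContinuousAt
  simpa using h4

lemma cont_muDot {n : ℕ} (μ : EuclideanSpace ℂ (Fin n)) {W : Euc n → Euc n}
    (hW : Continuous W) : Continuous (muDotW μ W) := by
  unfold muDotW
  apply continuous_finset_sum
  intro j _
  exact continuous_const.mul (Complex.continuous_ofReal.comp ((continuous_apply j).comp (by fun_prop : Continuous fun a => (W a).ofLp)))

-- exp difference bound
lemma exp_diff_bound (L : ℝ) (z w : ℂ) (hz : ‖z‖ ≤ L) (hw : ‖w‖ ≤ L) :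
    ‖Complex.exp (Complex.I * z) - Complex.exp (Complex.I * w)‖ ≤
      Real.exp L * (Real.exp (2 * L) + 3) * ‖z - w‖ := by
  have key : Complex.exp (Complex.I * z) - Complex.exp (Complex.I * w) =
      Complex.exp (Complex.I * w) * (Complex.exp (Complex.I * (z - w)) - 1) := by
    rw [mul_sub, mul_one, ← Complex.exp_add]
    congr 2
    ring
  rw [key, norm_mul]
  have h1 : ‖Complex.exp (Complex.I * w)‖ ≤ Real.exp L := by
    rw [Complex.norm_exp]
    apply Real.exp_le_exp.2
    have hre : (Complex.I * w).re = -w.im := by simp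
    rw [hre]
    calc -w.im ≤ |w.im| := neg_le_abs _
      _ ≤ ‖w‖ := Complex.abs_im_le_norm w
      _ ≤ L := hw
  have hnorm : ‖Complex.I * (z - w)‖ = ‖z - w‖ := by
    rw [norm_mul, Complex.norm_I, one_mul]
  have hzw2L : ‖z - w‖ ≤ 2 * L := by
    calc ‖z - w‖ ≤ ‖z‖ + ‖w‖ := norm_sub_le z w
      _ ≤ 2 * L := by linarith
  have h2 : ‖Complex.exp (Complex.I * (z - w)) - 1‖ ≤ (Real.exp (2 * L) + 3) * ‖z - w‖ := by
    by_cases hle : ‖z - w‖ ≤ 1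
    · have h2a := Complex.norm_exp_sub_one_le (x := Complex.I * (z - w))
        (by rw [hnorm]; exact hle)
      rw [hnorm] at h2a
      calc ‖Complex.exp (Complex.I * (z - w)) - 1‖ ≤ 2 * ‖z - w‖ := h2a
        _ ≤ (Real.exp (2 * L) + 3) * ‖z - w‖ := by
            apply mul_le_mul_of_nonneg_right _ (norm_nonneg _)
            linarith [Real.exp_pos (2 * L)]
    · push_neg at hle
      have hexpnorm : ‖Complex.exp (Complex.I * (z - w))‖ ≤ Real.exp (2 * L) := by
        rw [Complex.norm_exp]
        apply Real.exp_le_exp.2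
        have hre : (Complex.I * (z - w)).re = -(z - w).im := by simp
        rw [hre]
        calc -(z - w).im ≤ |(z - w).im| := neg_le_abs _
          _ ≤ ‖z - w‖ := Complex.abs_im_le_norm _
          _ ≤ 2 * L := hzw2L
      calc ‖Complex.exp (Complex.I * (z - w)) - 1‖
          ≤ ‖Complex.exp (Complex.I * (z - w))‖ + ‖(1 : ℂ)‖ := norm_sub_le _ _
        _ ≤ Real.exp (2 * L) + 1 := by rw [norm_one]; linarith
        _ ≤ (Real.exp (2 * L) + 3) * 1 := by linarith
        _ ≤ (Real.exp (2 * L) + 3) * ‖z - w‖ := by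
            apply mul_le_mul_of_nonneg_left hle.le
            linarith [Real.exp_pos (2 * L)]
  calc ‖Complex.exp (Complex.I * w)‖ * ‖Complex.exp (Complex.I * (z - w)) - 1‖
      ≤ Real.exp L * ((Real.exp (2 * L) + 3) * ‖z - w‖) :=
        mul_le_mul h1 h2 (norm_nonneg _) (Real.exp_pos L).le
    _ = Real.exp L * (Real.exp (2 * L) + 3) * ‖z - w‖ := by ring

lemma rad_nonneg (y : ℝ × ℝ) : 0 ≤ rad y := Real.sqrt_nonneg _

lemma bigG_nonneg (R : ℝ) (y : ℝ × ℝ) : 0 ≤ bigG R y :=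
  Set.indicator_nonneg (fun y _ => inv_nonneg.2 (rad_nonneg y)) y

lemma norm_den (y : ℝ × ℝ) : ‖((y.1 : ℂ) + (y.2 : ℂ) * Complex.I)‖ = rad y := by
  rw [Complex.norm_add_mul_I]; rfl

lemma abs_fst_le_rad (y : ℝ × ℝ) : |y.1| ≤ rad y := by
  rw [← Real.sqrt_sq_eq_abs]
  exact Real.sqrt_le_sqrt (by nlinarith [sq_nonneg y.2])

lemma abs_snd_le_rad (y : ℝ × ℝ) : |y.2| ≤ rad y := by
  rw [← Real.sqrt_sq_eq_abs]
  exact Real.sqrt_le_sqrt (by nlinarith [sq_nonneg y.1])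

theorem stmt3 (n : ℕ) (hn : 1 ≤ n) (ρ t M : ℝ) (hρ : 0 < ρ) (ht0 : 0 < t) (ht1 : t ≤ 1)
    (hM : 0 < M) :
    ∃ C : ℝ, 0 < C ∧
      ∀ W : Euc n → Euc n,
        (∀ x, ρ < ‖x‖ → W x = 0) →
        HolderBdd t M W →
        ∀ μ₁ μ₂ : EuclideanSpace ℂ (Fin n), GoodMu μ₁ → GoodMu μ₂ →
          ∀ x : Euc n, ‖x‖ ≤ ρ →
            ‖Complex.exp (Complex.I * Nmuinv μ₁ (fun y => -muDotW μ₁ W y) x)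
                - Complex.exp (Complex.I * Nmuinv μ₂ (fun y => -muDotW μ₂ W y) x)‖
              ≤ C * ‖μ₁ - μ₂‖ ^ t := by
  have hπ : (0 : ℝ) < π := Real.pi_pos
  set R := 2 * ρ with hRdef
  have hR : 0 < R := by positivity
  have hKint : Integrable (bigG R) := integrable_bigG hR
  set K := ∫ y : ℝ × ℝ, bigG R y with hKdef
  have hK0 : 0 ≤ K := integral_nonneg (bigG_nonneg R)
  set L := 1 / (2 * π) * (Real.sqrt 2 * M * K) with hLdef
  set c₂ := M * (2 * Real.sqrt 2) ^ (1 - t) + Real.sqrt 2 * M * 2 ^ t * R ^ t with hc2def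
  have hs2 : (0:ℝ) < Real.sqrt 2 := by positivity
  have hc₂0 : 0 ≤ c₂ := by rw [hc2def]; positivity
  have hC0 : 0 ≤ Real.exp L * (Real.exp (2 * L) + 3) * (1 / (2 * π) * c₂ * K) := by
    apply mul_nonneg
    · positivity
    · exact mul_nonneg (mul_nonneg (by positivity) hc₂0) hK0
  refine ⟨Real.exp L * (Real.exp (2 * L) + 3) * (1 / (2 * π) * c₂ * K) + 1, by linarith, ?_⟩
  rintro W hsupp ⟨a, b, ha0, hb0, hab, hWa, hWb⟩ μ₁ μ₂ hμ₁ hμ₂ x hx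
  have haM : a ≤ M := by linarith
  have hbM : b ≤ M := by linarith
  have hWcont : Continuous W := cont_of_holder ht0 hWb
  set d := ‖μ₁ - μ₂‖ with hddef
  have hd0 : 0 ≤ d := norm_nonneg _
  have hd2 : d ≤ 2 * Real.sqrt 2 := by
    calc d ≤ ‖μ₁‖ + ‖μ₂‖ := norm_sub_le _ _
      _ = 2 * Real.sqrt 2 := by rw [norm_goodmu hμ₁, norm_goodmu hμ₂]; ring
  -- master facts for each good μ
  have master : ∀ μ : EuclideanSpace ℂ (Fin n), GoodMu μ →
      (∀ y : ℝ × ℝ, ¬ rad y ≤ R → muDotW μ W (x - y.1 • reV μ - y.2 • imV μ) = 0) ∧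
      Integrable (fun y : ℝ × ℝ =>
        (-muDotW μ W (x - y.1 • reV μ - y.2 • imV μ)) / ((y.1 : ℂ) + (y.2 : ℂ) * Complex.I)) ∧
      ‖∫ y : ℝ × ℝ,
        (-muDotW μ W (x - y.1 • reV μ - y.2 • imV μ)) / ((y.1 : ℂ) + (y.2 : ℂ) * Complex.I)‖
        ≤ Real.sqrt 2 * M * K := by
    intro μ hμ
    have hsupp0 : ∀ y : ℝ × ℝ, ¬ rad y ≤ R →
        muDotW μ W (x - y.1 • reV μ - y.2 • imV μ) = 0 := by
      intro y hy
      push_neg at hy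
      have hz : ρ < ‖x - y.1 • reV μ - y.2 • imV μ‖ := by
        rw [sub_sub]
        have h2 : ‖y.1 • reV μ + y.2 • imV μ‖ = rad y := (norm_comb hμ y.1 y.2)
        calc ρ < rad y - ρ := by rw [hRdef] at hy; linarith
          _ ≤ ‖y.1 • reV μ + y.2 • imV μ‖ - ‖x‖ := by rw [h2]; linarith
          _ ≤ ‖(y.1 • reV μ + y.2 • imV μ) - x‖ := norm_sub_norm_le _ _
          _ = ‖x - (y.1 • reV μ + y.2 • imV μ)‖ := norm_sub_rev _ _
      have hW0 := hsupp _ hz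
      unfold muDotW
      rw [hW0]
      simp
    have hbd : ∀ y : ℝ × ℝ,
        ‖(-muDotW μ W (x - y.1 • reV μ - y.2 • imV μ)) / ((y.1 : ℂ) + (y.2 : ℂ) * Complex.I)‖
          ≤ Real.sqrt 2 * M * bigG R y := by
      intro y
      by_cases hyR : rad y ≤ R
      · have hbigG : bigG R y = (rad y)⁻¹ :=
        Set.indicator_of_mem (show y ∈ {y : ℝ × ℝ | rad y ≤ R} from hyR) _
        rw [norm_div, norm_den, hbigG, div_eq_mul_inv]
        apply mul_le_mul_of_nonneg_right _ (inv_nonneg.2 (rad_nonneg y))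
        rw [norm_neg]
        calc ‖muDotW μ W (x - y.1 • reV μ - y.2 • imV μ)‖
            ≤ ‖μ‖ * ‖W (x - y.1 • reV μ - y.2 • imV μ)‖ := muDot_norm_le μ _
          _ ≤ Real.sqrt 2 * M := by
              rw [norm_goodmu hμ]
              exact mul_le_mul_of_nonneg_left (le_trans (hWa _) haM) hs2.le
      · have h0 : bigG R y = 0 :=
          Set.indicator_of_notMem (show y ∉ {y : ℝ × ℝ | rad y ≤ R} from fun h => hyR h) _
        rw [hsupp0 y hyR, h0]
        simp
    have hmeas : AEStronglyMeasurable (fun y : ℝ × ℝ =>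
        (-muDotW μ W (x - y.1 • reV μ - y.2 • imV μ)) / ((y.1 : ℂ) + (y.2 : ℂ) * Complex.I))
        volume := by
      apply Measurable.aestronglyMeasurable
      apply Measurable.div
      · apply Continuous.measurable
        apply Continuous.neg
        apply (cont_muDot μ hWcont).comp
        fun_prop
      · fun_prop
    have hint : Integrable (fun y : ℝ × ℝ =>
        (-muDotW μ W (x - y.1 • reV μ - y.2 • imV μ)) / ((y.1 : ℂ) + (y.2 : ℂ) * Complex.I)) :=
      (hKint.const_mul (Real.sqrt 2 * M)).mono' hmeas (Filter.Eventually.of_forall hbd)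
    refine ⟨hsupp0, hint, ?_⟩
    calc ‖∫ y : ℝ × ℝ,
        (-muDotW μ W (x - y.1 • reV μ - y.2 • imV μ)) / ((y.1 : ℂ) + (y.2 : ℂ) * Complex.I)‖
        ≤ ∫ y : ℝ × ℝ, Real.sqrt 2 * M * bigG R y :=
          norm_integral_le_of_norm_le (hKint.const_mul _) (Filter.Eventually.of_forall hbd)
      _ = Real.sqrt 2 * M * K := by rw [hKdef, integral_const_mul]
  obtain ⟨hs₁, hint₁, hnorm₁⟩ := master μ₁ hμ₁
  obtain ⟨hs₂supp, hint₂, hnorm₂⟩ := master μ₂ hμ₂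
  -- pointwise difference bound
  have hdt : d ≤ (2 * Real.sqrt 2) ^ (1 - t) * d ^ t := by
    rcases eq_or_lt_of_le hd0 with h | h
    · rw [← h, Real.zero_rpow ht0.ne']
      simp
    · have h1 : d = d ^ (1 - t) * d ^ t := by
        rw [← Real.rpow_add h, sub_add_cancel, Real.rpow_one]
      exact h1.le.trans <| mul_le_mul_of_nonneg_right (Real.rpow_le_rpow hd0 hd2 (by linarith))
        (Real.rpow_nonneg hd0 t)
  have hdiff : ∀ y : ℝ × ℝ,
      ‖(-muDotW μ₁ W (x - y.1 • reV μ₁ - y.2 • imV μ₁)) / ((y.1 : ℂ) + (y.2 : ℂ) * Complex.I)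
        - (-muDotW μ₂ W (x - y.1 • reV μ₂ - y.2 • imV μ₂)) / ((y.1 : ℂ) + (y.2 : ℂ) * Complex.I)‖
        ≤ c₂ * d ^ t * bigG R y := by
    intro y
    by_cases hyR : rad y ≤ R
    · have hbigG : bigG R y = (rad y)⁻¹ :=
        Set.indicator_of_mem (show y ∈ {y : ℝ × ℝ | rad y ≤ R} from hyR) _
      rw [div_sub_div_same, norm_div, norm_den, hbigG, div_eq_mul_inv]
      apply mul_le_mul_of_nonneg_right _ (inv_nonneg.2 (rad_nonneg y))
      -- numerator bound
      set z₁ := x - y.1 • reV μ₁ - y.2 • imV μ₁ with hz₁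
      set z₂ := x - y.1 • reV μ₂ - y.2 • imV μ₂ with hz₂
      have hsplit : -muDotW μ₁ W z₁ - -muDotW μ₂ W z₂ =
          -((∑ j, (μ₁ - μ₂) j * ((W z₁ j : ℝ) : ℂ))
            + ∑ j, μ₂ j * (((W z₁ j : ℝ) : ℂ) - ((W z₂ j : ℝ) : ℂ))) := by
        unfold muDotW
        rw [← Finset.sum_add_distrib]
        rw [show -(∑ j, μ₁ j * ((W z₁ j : ℝ) : ℂ)) - -(∑ j, μ₂ j * ((W z₂ j : ℝ) : ℂ))
          = -((∑ j, μ₁ j * ((W z₁ j : ℝ) : ℂ)) - ∑ j, μ₂ j * ((W z₂ j : ℝ) : ℂ)) by ring,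
          ← Finset.sum_sub_distrib]
        congr 1
        refine Finset.sum_congr rfl fun j _ => ?_
        have hsub : (μ₁ - μ₂) j = μ₁ j - μ₂ j := rfl
        rw [hsub]
        ring
      rw [hsplit, norm_neg]
      have hS₁ : ‖∑ j, (μ₁ - μ₂) j * ((W z₁ j : ℝ) : ℂ)‖ ≤ d * a := by
        calc ‖∑ j, (μ₁ - μ₂) j * ((W z₁ j : ℝ) : ℂ)‖ ≤ ‖μ₁ - μ₂‖ * ‖W z₁‖ :=
            muDot_norm_le (μ₁ - μ₂) (W z₁)
          _ ≤ d * a := mul_le_mul_of_nonneg_left (hWa z₁) hd0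
      have hz₁₂ : ‖z₁ - z₂‖ ≤ 2 * rad y * d := by
        have heq : z₁ - z₂ = y.1 • (reV μ₂ - reV μ₁) + y.2 • (imV μ₂ - imV μ₁) := by
          rw [hz₁, hz₂, smul_sub, smul_sub]
          abel
        rw [heq]
        have hre : ‖reV μ₂ - reV μ₁‖ ≤ d := by
          rw [← reV_sub]
          calc ‖reV (μ₂ - μ₁)‖ ≤ ‖μ₂ - μ₁‖ := norm_reV_le _
            _ = d := norm_sub_rev _ _
        have him : ‖imV μ₂ - imV μ₁‖ ≤ d := by
          rw [← imV_sub]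
          calc ‖imV (μ₂ - μ₁)‖ ≤ ‖μ₂ - μ₁‖ := norm_imV_le _
            _ = d := norm_sub_rev _ _
        calc ‖y.1 • (reV μ₂ - reV μ₁) + y.2 • (imV μ₂ - imV μ₁)‖
            ≤ ‖y.1 • (reV μ₂ - reV μ₁)‖ + ‖y.2 • (imV μ₂ - imV μ₁)‖ := norm_add_le _ _
          _ = |y.1| * ‖reV μ₂ - reV μ₁‖ + |y.2| * ‖imV μ₂ - imV μ₁‖ := by
              rw [norm_smul, norm_smul, Real.norm_eq_abs, Real.norm_eq_abs]
          _ ≤ rad y * d + rad y * d := by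
              apply add_le_add
              · exact mul_le_mul (abs_fst_le_rad y) hre (norm_nonneg _) (rad_nonneg y)
              · exact mul_le_mul (abs_snd_le_rad y) him (norm_nonneg _) (rad_nonneg y)
          _ = 2 * rad y * d := by ring
      have hpow : ‖z₁ - z₂‖ ^ t ≤ 2 ^ t * R ^ t * d ^ t := by
        calc ‖z₁ - z₂‖ ^ t ≤ (2 * rad y * d) ^ t :=
            Real.rpow_le_rpow (norm_nonneg _) hz₁₂ ht0.le
          _ = 2 ^ t * rad y ^ t * d ^ t := by
              rw [Real.mul_rpow (mul_nonneg (by norm_num) (rad_nonneg y)) hd0,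
                Real.mul_rpow (by norm_num) (rad_nonneg y)]
          _ ≤ 2 ^ t * R ^ t * d ^ t := by
              apply mul_le_mul_of_nonneg_right _ (Real.rpow_nonneg hd0 t)
              exact mul_le_mul_of_nonneg_left
                (Real.rpow_le_rpow (rad_nonneg y) hyR ht0.le) (by positivity)
      have hS₂ : ‖∑ j, μ₂ j * (((W z₁ j : ℝ) : ℂ) - ((W z₂ j : ℝ) : ℂ))‖
          ≤ Real.sqrt 2 * (b * ‖z₁ - z₂‖ ^ t) := by
        calc ‖∑ j, μ₂ j * (((W z₁ j : ℝ) : ℂ) - ((W z₂ j : ℝ) : ℂ))‖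
            ≤ ‖μ₂‖ * ‖W z₁ - W z₂‖ := muDot_norm_le₂ μ₂ (W z₁) (W z₂)
          _ ≤ Real.sqrt 2 * (b * ‖z₁ - z₂‖ ^ t) := by
              rw [norm_goodmu hμ₂]
              exact mul_le_mul_of_nonneg_left (hWb z₁ z₂) hs2.le
      have e1 : d * a ≤ M * ((2 * Real.sqrt 2) ^ (1 - t) * d ^ t) := by
        calc d * a ≤ ((2 * Real.sqrt 2) ^ (1 - t) * d ^ t) * M :=
            mul_le_mul hdt haM ha0 (by positivity)
          _ = M * ((2 * Real.sqrt 2) ^ (1 - t) * d ^ t) := by ring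
      have e2 : Real.sqrt 2 * (b * ‖z₁ - z₂‖ ^ t)
          ≤ Real.sqrt 2 * M * 2 ^ t * R ^ t * d ^ t := by
        have : b * ‖z₁ - z₂‖ ^ t ≤ M * (2 ^ t * R ^ t * d ^ t) :=
          mul_le_mul hbM hpow (by positivity) hM.le
        calc Real.sqrt 2 * (b * ‖z₁ - z₂‖ ^ t) ≤ Real.sqrt 2 * (M * (2 ^ t * R ^ t * d ^ t)) :=
            mul_le_mul_of_nonneg_left this hs2.le
          _ = Real.sqrt 2 * M * 2 ^ t * R ^ t * d ^ t := by ring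
      calc ‖(∑ j, (μ₁ - μ₂) j * ((W z₁ j : ℝ) : ℂ))
            + ∑ j, μ₂ j * (((W z₁ j : ℝ) : ℂ) - ((W z₂ j : ℝ) : ℂ))‖
          ≤ ‖∑ j, (μ₁ - μ₂) j * ((W z₁ j : ℝ) : ℂ)‖
            + ‖∑ j, μ₂ j * (((W z₁ j : ℝ) : ℂ) - ((W z₂ j : ℝ) : ℂ))‖ := norm_add_le _ _
        _ ≤ M * ((2 * Real.sqrt 2) ^ (1 - t) * d ^ t)
            + Real.sqrt 2 * M * 2 ^ t * R ^ t * d ^ t :=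
            add_le_add (le_trans hS₁ e1) (le_trans hS₂ e2)
        _ = c₂ * d ^ t := by rw [hc2def]; ring
    · have h0 : bigG R y = 0 :=
        Set.indicator_of_notMem (show y ∉ {y : ℝ × ℝ | rad y ≤ R} from fun h => hyR h) _
      rw [hs₁ y hyR, hs₂supp y hyR, h0]
      simp
  -- assemble
  have hconst : ‖(1 / (2 * (π : ℂ)))‖ = 1 / (2 * π) := by
    have heq : (1 / (2 * (π : ℂ))) = ((1 / (2 * π) : ℝ) : ℂ) := by push_cast; ring
    rw [heq, Complex.norm_real, Real.norm_eq_abs, abs_of_pos (by positivity)]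
  have hA₁ : ‖Nmuinv μ₁ (fun y => -muDotW μ₁ W y) x‖ ≤ L := by
    rw [hLdef]
    show ‖(1 / (2 * (π : ℂ))) * _‖ ≤ _
    rw [norm_mul, hconst]
    exact mul_le_mul_of_nonneg_left hnorm₁ (by positivity)
  have hA₂ : ‖Nmuinv μ₂ (fun y => -muDotW μ₂ W y) x‖ ≤ L := by
    rw [hLdef]
    show ‖(1 / (2 * (π : ℂ))) * _‖ ≤ _
    rw [norm_mul, hconst]
    exact mul_le_mul_of_nonneg_left hnorm₂ (by positivity)
  have hAdiff : ‖Nmuinv μ₁ (fun y => -muDotW μ₁ W y) x - Nmuinv μ₂ (fun y => -muDotW μ₂ W y) x‖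
      ≤ 1 / (2 * π) * c₂ * K * d ^ t := by
    show ‖(1 / (2 * (π : ℂ))) * _ - (1 / (2 * (π : ℂ))) * _‖ ≤ _
    rw [← mul_sub, norm_mul, hconst, ← integral_sub hint₁ hint₂]
    have hle : ‖∫ y : ℝ × ℝ,
        ((-muDotW μ₁ W (x - y.1 • reV μ₁ - y.2 • imV μ₁)) / ((y.1 : ℂ) + (y.2 : ℂ) * Complex.I)
        - (-muDotW μ₂ W (x - y.1 • reV μ₂ - y.2 • imV μ₂)) / ((y.1 : ℂ) + (y.2 : ℂ) * Complex.I))‖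
        ≤ c₂ * d ^ t * K := by
      calc _ ≤ ∫ y : ℝ × ℝ, c₂ * d ^ t * bigG R y :=
          norm_integral_le_of_norm_le (hKint.const_mul _) (Filter.Eventually.of_forall hdiff)
        _ = c₂ * d ^ t * K := by rw [hKdef, integral_const_mul]
    calc 1 / (2 * π) * ‖∫ y : ℝ × ℝ,
        ((-muDotW μ₁ W (x - y.1 • reV μ₁ - y.2 • imV μ₁)) / ((y.1 : ℂ) + (y.2 : ℂ) * Complex.I)
        - (-muDotW μ₂ W (x - y.1 • reV μ₂ - y.2 • imV μ₂)) / ((y.1 : ℂ) + (y.2 : ℂ) * Complex.I))‖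
        ≤ 1 / (2 * π) * (c₂ * d ^ t * K) := mul_le_mul_of_nonneg_left hle (by positivity)
      _ = 1 / (2 * π) * c₂ * K * d ^ t := by ring
  calc ‖Complex.exp (Complex.I * Nmuinv μ₁ (fun y => -muDotW μ₁ W y) x)
        - Complex.exp (Complex.I * Nmuinv μ₂ (fun y => -muDotW μ₂ W y) x)‖
      ≤ Real.exp L * (Real.exp (2 * L) + 3) *
          ‖Nmuinv μ₁ (fun y => -muDotW μ₁ W y) x - Nmuinv μ₂ (fun y => -muDotW μ₂ W y) x‖ :=
        exp_diff_bound L _ _ hA₁ hA₂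
    _ ≤ Real.exp L * (Real.exp (2 * L) + 3) * (1 / (2 * π) * c₂ * K * d ^ t) :=
        mul_le_mul_of_nonneg_left hAdiff (by positivity)
    _ = Real.exp L * (Real.exp (2 * L) + 3) * (1 / (2 * π) * c₂ * K) * d ^ t := by ring
    _ ≤ (Real.exp L * (Real.exp (2 * L) + 3) * (1 / (2 * π) * c₂ * K) + 1) * d ^ t :=
        mul_le_mul_of_nonneg_right (by linarith) (Real.rpow_nonneg hd0 t)
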